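/- Let ω be a symplectic form on ℝ⁴ (with basis E₁,…,E₄ and dual basis E¹,…,E⁴) such that the cone γ̂ = {(s³, s²t, st², t³) : s,t ∈ ℝ} is Lagrangian, i.e. the tangent plane at every nonzero point of γ̂ is a 2-dimensional subspace on which ω vanishes identically. Then ω is a scalar multiple of E¹∧E⁴ − 3E²∧E³. Conversely, γ̂ is Lagrangian for ω = E¹∧E⁴ − 3E²∧E³. -/
import Mathlib


open Matrix
/-- The pairing of a matrix-represented bilinear form on `ℝ⁴`. -/
def pair4 (Ω : Matrix (Fin 4) (Fin 4) ℝ) (X Y : Fin 4 → ℝ) : ℝ :=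
  ∑ i, ∑ j, X i * Ω i j * Y j

/-- The matrix of the 2-form `E¹∧E⁴ − 3E²∧E³`. -/
def Omega0 : Matrix (Fin 4) (Fin 4) ℝ :=
  !![0, 0, 0, 1;
     0, 0, -3, 0;
     0, 3, 0, 0;
     -1, 0, 0, 0]

/-- First generator `X = (3s², 2st, t², 0)` of the tangent plane to the twisted cubic
cone at `(s³, s²t, st², t³)`. -/
def tangX (s t : ℝ) : Fin 4 → ℝ := ![3 * s ^ 2, 2 * s * t, t ^ 2, 0]

/-- Second generator `Y = (0, s², 2st, 3t²)`. -/
def tangY (s t : ℝ) : Fin 4 → ℝ := ![0, s ^ 2, 2 * s * t, 3 * t ^ 2]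

lemma twisted_cubic_aux (Ω : Matrix (Fin 4) (Fin 4) ℝ) (hskew : Ωᵀ = -Ω)
    (h : ∀ s t : ℝ, pair4 Ω (tangX s t) (tangY s t) = 0) :
    ∃ c : ℝ, Ω = c • Omega0 := by
  have hs : ∀ i j : Fin 4, Ω j i = -Ω i j := by
    intro i j
    have := congrFun (congrFun hskew i) j
    simpa [Matrix.transpose_apply] using this
  have h10 := h 1 0
  have h01 := h 0 1
  have h11 := h 1 1
  have h1m1 := h 1 (-1)
  have h21 := h 2 1
  simp only [pair4, tangX, tangY, Fin.sum_univ_four, Matrix.cons_val_zero,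
    Matrix.cons_val_one, Matrix.head_cons, Matrix.cons_val_two, Matrix.tail_cons,
    Matrix.cons_val_three] at h10 h01 h11 h1m1 h21
  refine ⟨Ω 0 3, ?_⟩
  have e10 := hs 0 1
  have e20 := hs 0 2
  have e30 := hs 0 3
  have e21 := hs 1 2
  have e31 := hs 1 3
  have e32 := hs 2 3
  have e00 := hs 0 0
  have e11' := hs 1 1
  have e22 := hs 2 2
  have e33 := hs 3 3
  have ha : Ω 0 1 = 0 := by linarith
  have hf : Ω 2 3 = 0 := by linarith
  have hd : Ω 1 2 = -3 * Ω 0 3 := by linarith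
  have hb : Ω 0 2 = 0 := by linarith
  have he : Ω 1 3 = 0 := by linarith
  ext i j
  fin_cases i <;> fin_cases j <;>
    simp [Omega0, Matrix.smul_apply, Matrix.vecHead, Matrix.vecTail] <;>
    linarith [ha, hb, hd, he, hf, e10, e20, e30, e21, e31, e32, e00, e11', e22, e33]

/-- A symplectic form on `ℝ⁴` for which the twisted cubic cone is Lagrangian is a
scalar multiple of `E¹∧E⁴ − 3E²∧E³`; conversely the cone is Lagrangian for that form. -/
theorem twisted_cubic_determines_symplectic_form :
    (∀ Ω : Matrix (Fin 4) (Fin 4) ℝ, Ωᵀ = -Ω → Ω.det ≠ 0 →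
      (∀ s t : ℝ, pair4 Ω (tangX s t) (tangY s t) = 0) →
      ∃ c : ℝ, Ω = c • Omega0) ∧
    (∀ s t : ℝ, pair4 Omega0 (tangX s t) (tangY s t) = 0) := by
  constructor
  · intro Ω hskew _ h
    exact twisted_cubic_aux Ω hskew h
  · intro s t
    simp [pair4, tangX, tangY, Omega0, Fin.sum_univ_four, Matrix.vecHead, Matrix.vecTail]
    ring
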